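/- Let (Ω, F, P) be a probability space, let n ≥ 1 and N ≥ 1 be natural numbers, let p ∈ (0, 1], and let X_1, …, X_n : Ω → {0, 1} be random indicator variables (X_i indicating survival of the stale entry created at update i) such that P(X_i = 1) ≤ (1 − p)^{⌊(n − i)/N⌋} for every i. Then the expected number of surviving stale entries satisfies E[Σ_{i=1}^{n} X_i] ≤ N / p. -/

import Mathlib

open MeasureTheory

lemma sleepgate_sum_pow_div (q : ℝ) (N : ℕ) (hN : 1 ≤ N) (m : ℕ) :
    ∑ j ∈ Finset.range (N * m), q ^ (j / N) = N * ∑ k ∈ Finset.range m, q ^ k := by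
  induction m with
  | zero => simp
  | succ m ih =>
    rw [Nat.mul_succ, Finset.sum_range_add, ih, Finset.sum_range_succ]
    have : ∀ t ∈ Finset.range N, q ^ ((N * m + t) / N) = q ^ m := by
      intro t ht
      have : (N * m + t) / N = m := by
        rw [Nat.mul_add_div (by omega : 0 < N)]
        simp [Nat.div_eq_of_lt (Finset.mem_range.mp ht)]
      rw [this]
    rw [Finset.sum_congr rfl this, Finset.sum_const, Finset.card_range, nsmul_eq_mul]
    ring

lemma sleepgate_geom_le (q : ℝ) (hq0 : 0 ≤ q) (hq1 : q < 1) (m : ℕ) :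
    ∑ k ∈ Finset.range m, q ^ k ≤ 1 / (1 - q) := by
  rw [geom_sum_eq (by linarith : q ≠ 1)]
  have hd : (q ^ m - 1) / (q - 1) = (1 - q ^ m) / (1 - q) := by
    rw [← neg_div_neg_eq]; ring_nf
  rw [hd, div_le_div_iff₀ (by linarith) (by linarith)]
  nlinarith [pow_nonneg hq0 m]

/-- Let `(Ω, F, P)` be a probability space, `n ≥ 1`, `N ≥ 1` natural numbers,
`p ∈ (0, 1]`, and `X_1, …, X_n : Ω → {0, 1}` random indicator variables
(indexed here by `i : Fin n`, with `X i` the indicator of survival of the stale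
entry created at update `i + 1`) such that
`P(X_i = 1) ≤ (1 - p) ^ ⌊(n - i)/N⌋` for every `i`. Then the expected number of
surviving stale entries satisfies `E[∑ i, X i] ≤ N / p`. -/
theorem sleepgate_expected_stale_le
    {Ω : Type*} [MeasurableSpace Ω] (P : Measure Ω) [IsProbabilityMeasure P]
    (n N : ℕ) (hn : 1 ≤ n) (hN : 1 ≤ N)
    (p : ℝ) (hp0 : 0 < p) (hp1 : p ≤ 1)
    (X : Fin n → Ω → ℝ) (hmeas : ∀ i, Measurable (X i))
    (h01 : ∀ i ω, X i ω = 0 ∨ X i ω = 1)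
    (hsurv : ∀ i : Fin n,
      P {ω | X i ω = 1} ≤ ENNReal.ofReal ((1 - p) ^ ((n - (i.1 + 1)) / N))) :
    ∫ ω, (∑ i, X i ω) ∂P ≤ (N : ℝ) / p := by
  set q : ℝ := 1 - p with hq
  have hq0 : 0 ≤ q := by linarith
  have hq1 : q < 1 := by linarith
  -- each X i is the indicator of A i
  set A : Fin n → Set Ω := fun i => {ω | X i ω = 1} with hA
  have hAmeas : ∀ i, MeasurableSet (A i) := fun i =>
    (hmeas i) (measurableSet_singleton 1)
  have hXind : ∀ i, X i = (A i).indicator (fun _ => (1 : ℝ)) := by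
    intro i
    funext ω
    rcases h01 i ω with h | h
    · rw [Set.indicator_apply, if_neg (by rw [hA]; simp [Set.mem_setOf_eq, h]), h]
    · rw [Set.indicator_apply, if_pos (by rw [hA]; simpa [Set.mem_setOf_eq] using h), h]
  have hint : ∀ i, Integrable (X i) P := by
    intro i
    rw [hXind i]
    exact (integrable_const (1 : ℝ)).indicator (hAmeas i)
  rw [integral_finset_sum _ (fun i _ => hint i)]
  have hIeq : ∀ i, ∫ ω, X i ω ∂P = (P (A i)).toReal := by
    intro i
    rw [hXind i, integral_indicator (hAmeas i)]
    simp
    rfl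
  have hexp : ∀ i : Fin n, ∫ ω, X i ω ∂P ≤ q ^ ((n - (i.1 + 1)) / N) := by
    intro i
    rw [hIeq i]
    have := hsurv i
    calc (P (A i)).toReal ≤ (ENNReal.ofReal (q ^ ((n - (i.1 + 1)) / N))).toReal :=
          ENNReal.toReal_mono ENNReal.ofReal_ne_top this
      _ = q ^ ((n - (i.1 + 1)) / N) := ENNReal.toReal_ofReal (pow_nonneg hq0 _)
  calc ∑ i, ∫ ω, X i ω ∂P
      ≤ ∑ i : Fin n, q ^ ((n - (i.1 + 1)) / N) := Finset.sum_le_sum (fun i _ => hexp i)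
    _ = ∑ j ∈ Finset.range n, q ^ ((n - 1 - j) / N) := by
        rw [Fin.sum_univ_eq_sum_range (fun j => q ^ ((n - (j + 1)) / N)) n]
        exact Finset.sum_congr rfl (fun j _ => by norm_num [Nat.sub_sub, Nat.add_comm])
    _ = ∑ j ∈ Finset.range n, q ^ (j / N) := Finset.sum_range_reflect (fun j => q ^ (j / N)) n
    _ ≤ ∑ j ∈ Finset.range (N * n), q ^ (j / N) := by
        apply Finset.sum_le_sum_of_subset_of_nonneg
        · exact Finset.range_subset_range.mpr (Nat.le_mul_of_pos_left n (by omega))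
        · intro j _ _; exact pow_nonneg hq0 _
    _ = N * ∑ k ∈ Finset.range n, q ^ k := sleepgate_sum_pow_div q N hN n
    _ ≤ N * (1 / (1 - q)) := by
        apply mul_le_mul_of_nonneg_left (sleepgate_geom_le q hq0 hq1 n)
        exact Nat.cast_nonneg N
    _ = (N : ℝ) / p := by rw [hq]; ring
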